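/- Let θ₁, θ₂ ∈ [0, π], φ ∈ [0, π/2), and r, r₁, r₂ > 0. Let x⁰, x¹, x² be points of the nonnegative quadrant of ℝ² satisfying x⁰ - x¹ = r₁(cos θ₁, sin θ₁) and x² - x⁰ = r₂(cos θ₂, sin θ₂). Let c = r(cos φ, sin φ), let g(x) = ⟨c, x⟩, and let d = {x ∈ ℝ² : g(x) = 0} be the kernel line of g. Then the two inequalities dist(x⁰, d) ≥ dist(x¹, d) and dist(x⁰, d) ≥ dist(x², d) hold if and only if θ₁ ≤ φ + π/2 ≤ θ₂. -/

import Mathlib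

open Real

lemma infDist_hyperplane (c x : EuclideanSpace ℝ (Fin 2)) (hc : c ≠ 0) :
    Metric.infDist x {y : EuclideanSpace ℝ (Fin 2) | (inner ℝ c y : ℝ) = 0}
      = |(inner ℝ c x : ℝ)| / ‖c‖ := by
  have hcn : (0:ℝ) < ‖c‖ := norm_pos_iff.mpr hc
  have hne : ({y : EuclideanSpace ℝ (Fin 2) | (inner ℝ c y : ℝ) = 0}).Nonempty :=
    ⟨0, by simp⟩
  apply le_antisymm
  · set y : EuclideanSpace ℝ (Fin 2) := x - ((inner ℝ c x : ℝ) / ‖c‖ ^ 2) • c with hy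
    have hmem : y ∈ {y : EuclideanSpace ℝ (Fin 2) | (inner ℝ c y : ℝ) = 0} := by
      simp only [hy, Set.mem_setOf_eq, inner_sub_right, inner_smul_right,
        real_inner_self_eq_norm_sq]
      field_simp
      simp
    calc Metric.infDist x _ ≤ dist x y := Metric.infDist_le_dist_of_mem hmem
      _ = |(inner ℝ c x : ℝ)| / ‖c‖ := by
        rw [dist_eq_norm, hy]
        simp only [sub_sub_cancel, norm_smul]
        rw [Real.norm_eq_abs, abs_div, abs_pow, abs_norm]
        field_simp
  · by_contra hlt
    push_neg at hlt
    obtain ⟨y, hy, hdy⟩ := (Metric.infDist_lt_iff hne).1 hlt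
    refine absurd hdy (not_lt.2 ?_)
    have h0 : (inner ℝ c y : ℝ) = 0 := hy
    have heq : |(inner ℝ c x : ℝ)| = |(inner ℝ c (x - y) : ℝ)| := by
      rw [inner_sub_right, h0, sub_zero]
    rw [heq, div_le_iff₀ hcn]
    calc |(inner ℝ c (x - y) : ℝ)| ≤ ‖c‖ * ‖x - y‖ := abs_real_inner_le_norm c (x - y)
      _ = dist x y * ‖c‖ := by rw [dist_eq_norm]; ring

/-- Polar characterization: with `x⁰ - x¹ = r₁(cos θ₁, sin θ₁)`, `x² - x⁰ = r₂(cos θ₂, sin θ₂)`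
points of the nonnegative quadrant, `c = r(cos φ, sin φ)`, `g(x) = ⟨c, x⟩` and `d` the kernel
line of `g`, the inequalities `dist(x⁰,d) ≥ dist(x¹,d)` and `dist(x⁰,d) ≥ dist(x²,d)` hold
iff `θ₁ ≤ φ + π/2 ≤ θ₂`. -/
theorem stmt_3 (θ₁ θ₂ φ r r₁ r₂ : ℝ)
    (hθ₁ : θ₁ ∈ Set.Icc 0 π) (hθ₂ : θ₂ ∈ Set.Icc 0 π)
    (hφ : φ ∈ Set.Ico 0 (π / 2))
    (hr : 0 < r) (hr₁ : 0 < r₁) (hr₂ : 0 < r₂)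
    (x₀ x₁ x₂ : EuclideanSpace ℝ (Fin 2))
    (hq₀ : 0 ≤ x₀ 0 ∧ 0 ≤ x₀ 1) (hq₁ : 0 ≤ x₁ 0 ∧ 0 ≤ x₁ 1) (hq₂ : 0 ≤ x₂ 0 ∧ 0 ≤ x₂ 1)
    (h₁ : x₀ 0 - x₁ 0 = r₁ * cos θ₁ ∧ x₀ 1 - x₁ 1 = r₁ * sin θ₁)
    (h₂ : x₂ 0 - x₀ 0 = r₂ * cos θ₂ ∧ x₂ 1 - x₀ 1 = r₂ * sin θ₂)
    (c : EuclideanSpace ℝ (Fin 2)) (hc : c 0 = r * cos φ ∧ c 1 = r * sin φ)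
    (g : EuclideanSpace ℝ (Fin 2) → ℝ)
    (hg : ∀ x, g x = inner ℝ c x)
    (d : Set (EuclideanSpace ℝ (Fin 2)))
    (hd : d = {x | g x = 0}) :
    (Metric.infDist x₁ d ≤ Metric.infDist x₀ d ∧
        Metric.infDist x₂ d ≤ Metric.infDist x₀ d) ↔
      (θ₁ ≤ φ + π / 2 ∧ φ + π / 2 ≤ θ₂) := by
  have hcosφ : 0 < cos φ := cos_pos_of_mem_Ioo ⟨by linarith [hφ.1, pi_pos], hφ.2⟩
  have hsinφ : 0 ≤ sin φ := sin_nonneg_of_nonneg_of_le_pi hφ.1 (by linarith [hφ.2, pi_pos])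
  have hc0 : 0 < c 0 := hc.1 ▸ mul_pos hr hcosφ
  have hc1 : 0 ≤ c 1 := hc.2 ▸ mul_nonneg hr.le hsinφ
  have hcne : c ≠ 0 := fun h => by simp [h] at hc0
  have hcn : (0:ℝ) < ‖c‖ := norm_pos_iff.mpr hcne
  -- rewrite d
  have hdset : d = {y : EuclideanSpace ℝ (Fin 2) | (inner ℝ c y : ℝ) = 0} := by
    rw [hd]; ext y; simp [hg]
  -- inner in coordinates
  have hip : ∀ z : EuclideanSpace ℝ (Fin 2), (inner ℝ c z : ℝ) = c 0 * z 0 + c 1 * z 1 := by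
    intro z
    simp [PiLp.inner_apply, Fin.sum_univ_two]
    ring
  have hnn : ∀ z : EuclideanSpace ℝ (Fin 2), 0 ≤ z 0 → 0 ≤ z 1 → 0 ≤ (inner ℝ c z : ℝ) := by
    intro z h0 h1
    rw [hip]
    positivity
  have key : ∀ z : EuclideanSpace ℝ (Fin 2), 0 ≤ z 0 → 0 ≤ z 1 →
      Metric.infDist z d = (inner ℝ c z : ℝ) / ‖c‖ := by
    intro z h0 h1
    rw [hdset, infDist_hyperplane c z hcne, abs_of_nonneg (hnn z h0 h1)]
  rw [key x₀ hq₀.1 hq₀.2, key x₁ hq₁.1 hq₁.2, key x₂ hq₂.1 hq₂.2]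
  rw [div_le_div_iff_of_pos_right hcn, div_le_div_iff_of_pos_right hcn]
  have e1 : (inner ℝ c x₀ : ℝ) - inner ℝ c x₁ = r * r₁ * cos (θ₁ - φ) := by
    rw [hip, hip, cos_sub]
    have := h₁.1; have := h₁.2
    rw [hc.1, hc.2]; nlinarith [h₁.1, h₁.2]
  have e2 : (inner ℝ c x₂ : ℝ) - inner ℝ c x₀ = r * r₂ * cos (θ₂ - φ) := by
    rw [hip, hip, cos_sub]
    rw [hc.1, hc.2]; nlinarith [h₂.1, h₂.2]
  have hrr₁ : (0:ℝ) < r * r₁ := mul_pos hr hr₁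
  have hrr₂ : (0:ℝ) < r * r₂ := mul_pos hr hr₂
  constructor
  · rintro ⟨ha, hb⟩
    have hm1 : 0 ≤ r * r₁ * cos (θ₁ - φ) := by linarith
    have hm2 : r * r₂ * cos (θ₂ - φ) ≤ 0 := by linarith
    have hcos1 : 0 ≤ cos (θ₁ - φ) := nonneg_of_mul_nonneg_right hm1 hrr₁
    have hcos2 : cos (θ₂ - φ) ≤ 0 := nonpos_of_mul_nonpos_right hm2 hrr₂
    constructor
    · by_contra hgt
      push_neg at hgt
      have : cos (θ₁ - φ) < 0 := by
        apply cos_neg_of_pi_div_two_lt_of_lt <;> [linarith; linarith [hθ₁.2, hφ.1, pi_pos]]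
      linarith
    · by_contra hgt
      push_neg at hgt
      have : 0 < cos (θ₂ - φ) := by
        exact cos_pos_of_mem_Ioo (Set.mem_Ioo.mpr ⟨by linarith [hθ₂.1, hφ.2], by linarith⟩)
      linarith
  · rintro ⟨ha, hb⟩
    have hcos1 : 0 ≤ cos (θ₁ - φ) := by
      apply cos_nonneg_of_mem_Icc
      constructor <;> [linarith [hθ₁.1, hφ.2]; linarith]
    have hcos2 : cos (θ₂ - φ) ≤ 0 := by
      apply cos_nonpos_of_pi_div_two_le_of_le <;> [linarith; linarith [hθ₂.2, hφ.1, pi_pos]]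
    have hm1 : 0 ≤ r * r₁ * cos (θ₁ - φ) := mul_nonneg hrr₁.le hcos1
    have hm2 : r * r₂ * cos (θ₂ - φ) ≤ 0 := mul_nonpos_of_nonneg_of_nonpos hrr₂.le hcos2
    exact ⟨by linarith, by linarith⟩
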